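/- Let A be a DFA with L_A ⊆ {0,1}^N, and A⊕ the padded DFA from the construction (with chain states q'_1,...,q'_N, final state q_fin, dead transitions at depth < N redirected into the chain, and depth-N states routed to q_fin on symbol 1 and, on symbol 0, to q_fin iff accepting in A). Then L_{A⊕} = {u·b : u ∈ {0,1}^N, b ∈ {0,1}, A(u)=1 or b=1}, and A⊕ has at most |A| + N + 1 states. -/
import Mathlib


/-- Correctness of the padded construction A⊕: starting from a minimal DFA A over {0,1}
with L_A ⊆ {0,1}^N (non-dead states having unique depths, given by `depth`, and with dead
state `qd`), the DFA M' on states Q ⊕ Fin (N+1) — where `Sum.inr j` for 1 ≤ j ≤ N is the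
chain state q'_j and `Sum.inr 0` is the unique accepting state q_fin — defined by:
chain transitions q'_j → q'_{j+1} for j < N, q'_N → q_fin on 1 and to dead on 0, q_fin to
dead on both symbols, dead transitions at depth < N redirected into the chain, and depth-N
states routed to q_fin on 1 and, on 0, to q_fin iff accepting in A — recognizes exactly
{u·b : u ∈ {0,1}^N, A(u)=1 or b=1}, and has at most |A| + N + 1 states. -/
theorem stmt_19 {Q : Type} [Fintype Q] [DecidableEq Q] (N : ℕ) (M : DFA Bool Q)
    (hlen : ∀ x ∈ M.accepts, x.length = N)
    (hsep : ∀ q q' : Q,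
      {s : List Bool | M.evalFrom q s ∈ M.accept} = {s : List Bool | M.evalFrom q' s ∈ M.accept} →
        q = q')
    (qd : Q) (hqdself : ∀ b : Bool, M.step qd b = qd) (hqdrej : qd ∉ M.accept)
    (hstartne : M.start ≠ qd)
    (depth : Q → ℕ)
    (hdepth : ∀ q : Q, q ≠ qd →
      (∃ x : List Bool, M.eval x = q) ∧
      (∀ x : List Bool, M.eval x = q → x.length = depth q) ∧ depth q ≤ N)
    [DecidablePred (· ∈ M.accept)]
    (M' : DFA Bool (Q ⊕ Fin (N + 1)))
    (hstart : M'.start = Sum.inl M.start)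
    (haccept : M'.accept = {Sum.inr (0 : Fin (N + 1))})
    (hchain : ∀ (j : Fin (N + 1)) (hj1 : 1 ≤ (j : ℕ)) (hjN : (j : ℕ) < N) (b : Bool),
      M'.step (Sum.inr j) b = Sum.inr ⟨(j : ℕ) + 1, by omega⟩)
    (hchainN : ∀ (j : Fin (N + 1)), (j : ℕ) = N →
      M'.step (Sum.inr j) true = Sum.inr 0 ∧ M'.step (Sum.inr j) false = Sum.inl qd)
    (hfin : ∀ b : Bool, M'.step (Sum.inr 0) b = Sum.inl qd)
    (hdeadstep : ∀ b : Bool, M'.step (Sum.inl qd) b = Sum.inl qd)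
    (hlow : ∀ (q : Q) (_ : q ≠ qd) (hdq : depth q < N) (b : Bool),
      M'.step (Sum.inl q) b =
        if M.step q b = qd then Sum.inr ⟨depth q + 1, by omega⟩
        else Sum.inl (M.step q b))
    (hhigh : ∀ (q : Q) (_ : q ≠ qd) (_ : depth q = N),
      M'.step (Sum.inl q) true = Sum.inr 0 ∧
      M'.step (Sum.inl q) false =
        (if q ∈ M.accept then Sum.inr (0 : Fin (N + 1)) else Sum.inl qd)) :
    M'.accepts = {x : List Bool | ∃ (u : List Bool) (b : Bool),
        x = u ++ [b] ∧ u.length = N ∧ (u ∈ M.accepts ∨ b = true)} ∧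
    Fintype.card (Q ⊕ Fin (N + 1)) ≤ Fintype.card Q + N + 1 := by
  have hd : ∀ u : List Bool, M.eval u ≠ qd → depth (M.eval u) = u.length :=
    fun u h => ((hdepth _ h).2.1 u rfl).symm
  have hdle : ∀ u : List Bool, M.eval u ≠ qd → u.length ≤ N :=
    fun u h => (hd u h) ▸ (hdepth _ h).2.2
  -- key lemma: behaviour on words of length ≤ N
  have key : ∀ u : List Bool, u.length ≤ N →
      (M.eval u = qd → ∃ h : 1 ≤ u.length ∧ u.length ≤ N,
        M'.eval u = Sum.inr ⟨u.length, by omega⟩) ∧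
      (M.eval u ≠ qd → M'.eval u = Sum.inl (M.eval u)) := by
    intro u
    induction u using List.reverseRecOn with
    | nil =>
      intro _
      refine ⟨fun h => absurd (by simpa using h) hstartne, fun _ => ?_⟩
      simp [DFA.eval_nil, hstart]
    | append_singleton u b ih =>
      intro hlen'
      have hu : u.length ≤ N := by simp at hlen'; omega
      obtain ⟨ih1, ih2⟩ := ih hu
      have hMev : M.eval (u ++ [b]) = M.step (M.eval u) b := by
        simp [DFA.eval_append_singleton]
      have hM'ev : M'.eval (u ++ [b]) = M'.step (M'.eval u) b := by
        simp [DFA.eval_append_singleton]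
      by_cases hqd : M.eval u = qd
      · obtain ⟨⟨h1, h2⟩, h3⟩ := ih1 hqd
        have hlt : u.length < N := by simp at hlen'; omega
        have hstep := hchain ⟨u.length, by omega⟩ (by simpa using h1) (by simpa using hlt) b
        have hnew : M.eval (u ++ [b]) = qd := by rw [hMev, hqd, hqdself]
        refine ⟨fun _ => ⟨⟨by simp, by simpa using hlen'⟩, ?_⟩,
          fun h => absurd hnew h⟩
        rw [hM'ev, h3, hstep]
        simp
      · have hde : depth (M.eval u) = u.length := hd u hqd
        have hlt : depth (M.eval u) < N := by simp at hlen'; omega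
        have hstep := hlow (M.eval u) hqd hlt b
        have hev' : M'.eval (u ++ [b]) =
            if M.step (M.eval u) b = qd then Sum.inr ⟨depth (M.eval u) + 1, by omega⟩
            else Sum.inl (M.step (M.eval u) b) := by
          rw [hM'ev, ih2 hqd, hstep]
        constructor
        · intro hnewqd
          rw [hMev] at hnewqd
          refine ⟨⟨by simp, by simpa using hlen'⟩, ?_⟩
          rw [hev', if_pos hnewqd]
          simp [hde]
        · intro hnewne
          rw [hMev] at hnewne
          rw [hev', if_neg hnewne, hMev]
  -- behaviour at length N+1
  have stepN : ∀ (u : List Bool) (b : Bool), u.length = N →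
      (M'.eval (u ++ [b]) = Sum.inr 0 ↔ (u ∈ M.accepts ∨ b = true)) ∧
      (M'.eval (u ++ [b]) = Sum.inr 0 ∨ M'.eval (u ++ [b]) = Sum.inl qd) := by
    intro u b huN
    have hM'ev : M'.eval (u ++ [b]) = M'.step (M'.eval u) b := by
      simp [DFA.eval_append_singleton]
    have hmem : u ∈ M.accepts ↔ M.eval u ∈ M.accept := Iff.rfl
    by_cases hqd : M.eval u = qd
    · obtain ⟨⟨h1, h2⟩, h3⟩ := (key u (le_of_eq huN)).1 hqd
      obtain ⟨ht, hf⟩ := hchainN ⟨u.length, by omega⟩ (by simpa using huN)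
      have hunotacc : ¬ u ∈ M.accepts := by
        rw [hmem, hqd]; exact hqdrej
      rw [hM'ev, h3]
      cases b
      · rw [hf]; simp [hunotacc]
      · rw [ht]; simp
    · have hde : depth (M.eval u) = N := by rw [hd u hqd, huN]
      obtain ⟨ht, hf⟩ := hhigh (M.eval u) hqd hde
      rw [hM'ev, (key u (le_of_eq huN)).2 hqd]
      cases b
      · rw [hf]
        by_cases hacc : M.eval u ∈ M.accept
        · simp [hacc, hmem]
        · simp [hacc, hmem]
      · rw [ht]; simp
  -- dead state absorbs
  have deadFrom : ∀ z : List Bool, M'.evalFrom (Sum.inl qd) z = Sum.inl qd := by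
    intro z
    induction z with
    | nil => rfl
    | cons a z ih =>
      have : M'.evalFrom (Sum.inl qd) (a :: z) = M'.evalFrom (M'.step (Sum.inl qd) a) z := rfl
      rw [this, hdeadstep a, ih]
  refine ⟨?_, by simp only [Fintype.card_sum, Fintype.card_fin]; omega⟩
  ext x
  have hmem' : x ∈ M'.accepts ↔ M'.eval x = Sum.inr 0 := by
    rw [DFA.mem_accepts, haccept]; simp
  rw [hmem']
  show _ ↔ ∃ (u : List Bool) (b : Bool), x = u ++ [b] ∧ u.length = N ∧ (u ∈ M.accepts ∨ b = true)
  constructor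
  · intro hx
    rcases lt_trichotomy x.length (N + 1) with hl | hl | hl
    · -- length ≤ N : impossible
      exfalso
      have hxle : x.length ≤ N := by omega
      by_cases hqd : M.eval x = qd
      · obtain ⟨⟨h1, h2⟩, h3⟩ := (key x hxle).1 hqd
        rw [h3] at hx
        have := Sum.inr.inj hx
        have : x.length = 0 := by
          have h0 := Fin.mk.injEq (n := N + 1) x.length (by omega) 0 (by omega)
          rw [Fin.ext_iff] at this
          simpa using this
        omega
      · rw [(key x hxle).2 hqd] at hx
        exact absurd hx (by simp)
    · -- length = N + 1
      have hne : x ≠ [] := by intro h; rw [h] at hl; simp at hl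
      have hdecomp : x.dropLast ++ [x.getLast hne] = x := List.dropLast_append_getLast hne
      have hulen : x.dropLast.length = N := by
        rw [List.length_dropLast]; omega
      refine ⟨x.dropLast, x.getLast hne, hdecomp.symm, hulen, ?_⟩
      exact ((stepN _ _ hulen).1).mp (by rwa [hdecomp])
    · -- length > N + 1 : impossible
      exfalso
      set y := x.take (N + 1) with hy
      set z := x.drop (N + 1) with hz
      have hxyz : x = y ++ z := (List.take_append_drop (N + 1) x).symm
      have hylen : y.length = N + 1 := by
        rw [hy, List.length_take]; omega
      have hyne : y ≠ [] := by intro h; rw [h] at hylen; simp at hylen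
      have hydecomp : y.dropLast ++ [y.getLast hyne] = y := List.dropLast_append_getLast hyne
      have hulen : y.dropLast.length = N := by rw [List.length_dropLast]; omega
      have hyval := (stepN y.dropLast (y.getLast hyne) hulen).2
      rw [hydecomp] at hyval
      have hxeval : M'.eval x = M'.evalFrom (M'.eval y) z := by
        rw [hxyz]; exact M'.evalFrom_of_append _ _ _
      have hzne : z ≠ [] := by
        intro h
        rw [hxyz, h] at hl; simp at hl; omega
      rcases hyval with hy0 | hyd
      · obtain ⟨c, z', hzz⟩ := List.exists_cons_of_ne_nil hzne
        have hst : M'.evalFrom (M'.eval y) (c :: z') =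
            M'.evalFrom (M'.step (M'.eval y) c) z' := rfl
        rw [hxeval, hzz, hst, hy0, hfin c, deadFrom] at hx
        exact absurd hx (by simp)
      · rw [hxeval, hyd, deadFrom] at hx
        exact absurd hx (by simp)
  · rintro ⟨u, b, rfl, huN, hcond⟩
    exact ((stepN u b huN).1).mpr hcond
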